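/- Let L = F_{2^l}, q = 2^k, and let f(x,y) = x^{q+1} + b x^q y + c x y^q + d y^{q+1} be a q-biprojective polynomial with leading coefficient 1, and suppose the univariate polynomial f(x,1) has a root r ∈ L. Then f(x,1) is, up to the action of translation by r, reciprocation, and scaling, equivalent to an affine q-polynomial of degree less than q+1; in particular the number of roots of f(x,1) in L equals 1 plus the number of roots in L of (r+1)^q x^q + r x + 1 (after the substitution x ↦ x + r and reciprocation). -/

import Mathlib

/-- Let L = F_{2^l}, q = 2^k, f(x) = x^{q+1} + x + d with a root r ∈ L. Then
f(x+r) = x^{q+1} + r x^q + (r+1)^q x, and the number of roots of f in L equals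
1 plus the number of roots in L of (r+1)^q x^q + r x + 1 (obtained by
translation by r and reciprocation). -/
theorem root_count_via_reciprocal (k l : ℕ) (hk : 0 < k) (hl : 0 < l)
    (L : Type) [Field L] [Fintype L] [DecidableEq L] (hcard : Fintype.card L = 2 ^ l)
    (d r : L) (hr : r ^ (2 ^ k + 1) + r + d = 0) :
    (∀ x : L, (x + r) ^ (2 ^ k + 1) + (x + r) + d =
        x ^ (2 ^ k + 1) + r * x ^ (2 ^ k) + (r + 1) ^ (2 ^ k) * x) ∧
    (Finset.univ.filter fun x : L => x ^ (2 ^ k + 1) + x + d = 0).card =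
      1 + (Finset.univ.filter fun x : L =>
        (r + 1) ^ (2 ^ k) * x ^ (2 ^ k) + r * x + 1 = 0).card := by
  -- characteristic 2
  haveI : Fact (Nat.Prime 2) := ⟨Nat.prime_two⟩
  haveI hchar : CharP L 2 := by
    obtain ⟨n, hp, hcard'⟩ := FiniteField.card L (ringChar L)
    have hdvd : ringChar L ∣ 2 ^ l := by
      rw [← hcard, hcard']
      exact dvd_pow_self _ (by positivity)
    have : ringChar L = 2 :=
      (Nat.prime_dvd_prime_iff_eq hp Nat.prime_two).mp (hp.dvd_of_dvd_pow hdvd)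
    rw [← this]; exact ringChar.charP L
  have frob : ∀ x y : L, (x + y) ^ 2 ^ k = x ^ 2 ^ k + y ^ 2 ^ k := fun x y =>
    add_pow_char_pow ..
  have hr' : r ^ 2 ^ k * r + r + d = 0 := by rw [← pow_succ]; exact hr
  have part1 : ∀ x : L, (x + r) ^ (2 ^ k + 1) + (x + r) + d =
      x ^ (2 ^ k + 1) + r * x ^ (2 ^ k) + (r + 1) ^ (2 ^ k) * x := by
    intro x
    rw [pow_succ, pow_succ, frob, frob, one_pow]
    linear_combination hr'
  refine ⟨part1, ?_⟩
  -- translate roots of f to roots of g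
  have hRR : r + r = 0 := by
    have := CharTwo.add_self_eq_zero (R := L) r; exact this
  have step1 : (Finset.univ.filter fun x : L => x ^ (2 ^ k + 1) + x + d = 0).card =
      (Finset.univ.filter fun x : L =>
        x ^ (2 ^ k + 1) + r * x ^ (2 ^ k) + (r + 1) ^ (2 ^ k) * x = 0).card := by
    apply Finset.card_bij' (fun x _ => x + r) (fun x _ => x + r)
    · intro a ha
      simp only [Finset.mem_filter, Finset.mem_univ, true_and] at ha ⊢
      rw [← part1]
      have : a + r + r = a := by rw [add_assoc, hRR, add_zero]
      rw [this]; exact ha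
    · intro a ha
      simp only [Finset.mem_filter, Finset.mem_univ, true_and] at ha ⊢
      rw [part1]; exact ha
    · intro a _; rw [add_assoc, hRR, add_zero]
    · intro a _; rw [add_assoc, hRR, add_zero]
  rw [step1]
  -- 0 is a root of g
  set S := Finset.univ.filter fun x : L =>
      x ^ (2 ^ k + 1) + r * x ^ (2 ^ k) + (r + 1) ^ (2 ^ k) * x = 0 with hS
  have hq0 : (0:L) ^ (2 ^ k) = 0 := zero_pow (by positivity)
  have h0 : (0 : L) ∈ S := by
    simp only [hS, Finset.mem_filter, Finset.mem_univ, true_and]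
    rw [pow_succ, hq0]
    ring
  -- key equivalence for nonzero x
  have key : ∀ x : L, x ≠ 0 →
      ((r + 1) ^ 2 ^ k * (x⁻¹) ^ 2 ^ k + r * x⁻¹ + 1 = 0 ↔
        x ^ (2 ^ k + 1) + r * x ^ (2 ^ k) + (r + 1) ^ (2 ^ k) * x = 0) := by
    intro x hx
    have hxq : x ^ (2 ^ k + 1) ≠ 0 := pow_ne_zero _ hx
    have heq : (r + 1) ^ 2 ^ k * (x⁻¹) ^ 2 ^ k + r * x⁻¹ + 1 =
        (x ^ (2 ^ k + 1) + r * x ^ (2 ^ k) + (r + 1) ^ (2 ^ k) * x) / x ^ (2 ^ k + 1) := by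
      rw [inv_pow]
      field_simp
      ring
    rw [heq, div_eq_zero_iff]
    constructor
    · rintro (h | h)
      · exact h
      · exact absurd h hxq
    · exact Or.inl
  have step2 : S.card = 1 + ((Finset.univ.filter fun x : L =>
      (r + 1) ^ (2 ^ k) * x ^ (2 ^ k) + r * x + 1 = 0)).card := by
    rw [← Finset.card_erase_add_one h0, add_comm]
    congr 1
    have hi : ∀ a ∈ S.erase 0, a⁻¹ ∈ (Finset.univ.filter fun x : L =>
        (r + 1) ^ (2 ^ k) * x ^ (2 ^ k) + r * x + 1 = 0) := by
      intro a ha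
      rw [Finset.mem_erase, hS, Finset.mem_filter] at ha
      obtain ⟨hne, _, hroot⟩ := ha
      simp only [Finset.mem_filter, Finset.mem_univ, true_and]
      exact (key a hne).mpr hroot
    have hj : ∀ a ∈ (Finset.univ.filter fun x : L =>
        (r + 1) ^ (2 ^ k) * x ^ (2 ^ k) + r * x + 1 = 0), a⁻¹ ∈ S.erase 0 := by
      intro a ha
      simp only [Finset.mem_filter, Finset.mem_univ, true_and] at ha
      have hane : a ≠ 0 := by
        rintro rfl
        rw [hq0, mul_zero, mul_zero, zero_add, zero_add] at ha
        exact one_ne_zero ha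
      rw [Finset.mem_erase, hS, Finset.mem_filter]
      refine ⟨inv_ne_zero hane, Finset.mem_univ _, ?_⟩
      have := (key a⁻¹ (inv_ne_zero hane)).mp
      rw [inv_inv] at this
      exact this ha
    exact Finset.card_bij' (fun x _ => x⁻¹) (fun x _ => x⁻¹) hi hj
      (fun a _ => inv_inv a) (fun a _ => inv_inv a)
  exact step2
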